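/- Let μ > 0 and L_max > μ, and set Q := 2√(L_max/μ). Let {L_j}_{j≥0} be a nondecreasing sequence with μ < L_j ≤ L_max for all j. Define sequences {a_j}, {A_j}, {τ_j} by A_0 = 0, τ_0 = 1, and for j ≥ 0: a_j := (τ_j + √(τ_j² + 4τ_j A_j (L_{j+1} − μ)))/(2(L_{j+1} − μ)), A_{j+1} := A_j + a_j, τ_{j+1} := τ_j + a_j μ. Then for every j ≥ 1, A_j L_j ≥ max{ j²/4, (1 + 1/Q)^{2(j−1)} }. -/

import Mathlib

lemma aux_rate (r x b : ℝ) (hx : 0 < x) (hb : x < b)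
    (h : x * b ≤ r^2 * (b - x)^2) : (2*r+1)^2 * x ≤ 4*r^2 * b := by
  by_contra hlt
  push_neg at hlt
  have hbx : 0 < b - x := by linarith
  have hrbx : x < r * (b - x) := by nlinarith
  have hr0 : 0 < r := by nlinarith
  nlinarith [mul_pos hx hbx, mul_pos hx hx, sq_nonneg (r*(b-x) - x),
    mul_lt_mul_of_pos_left hrbx (by positivity : (0:ℝ) < 16*r*x)]

set_option maxHeartbeats 1000000 in
theorem stmt15 (μ Lmax : ℝ) (hμ : 0 < μ) (hLmax : μ < Lmax)
    (Q : ℝ) (hQ : Q = 2 * Real.sqrt (Lmax / μ))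
    (L : ℕ → ℝ) (hmono : Monotone L) (hLb : ∀ j, μ < L j ∧ L j ≤ Lmax)
    (a A τ : ℕ → ℝ) (hA0 : A 0 = 0) (hτ0 : τ 0 = 1)
    (ha : ∀ j, a j =
      (τ j + Real.sqrt ((τ j) ^ 2 + 4 * τ j * A j * (L (j + 1) - μ))) /
        (2 * (L (j + 1) - μ)))
    (hA : ∀ j, A (j + 1) = A j + a j)
    (hτ : ∀ j, τ (j + 1) = τ j + a j * μ) :
    ∀ j : ℕ, 1 ≤ j →
      max ((j : ℝ) ^ 2 / 4) ((1 + 1 / Q) ^ (2 * (j - 1))) ≤ A j * L j := by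
  have hc : ∀ j : ℕ, 0 < L (j + 1) - μ := fun j => sub_pos.2 (hLb (j + 1)).1
  -- positivity of τ and A
  have hpos : ∀ j, 1 ≤ τ j ∧ 0 ≤ A j := by
    intro j
    induction j with
    | zero => simp [hA0, hτ0]
    | succ n ih =>
      have hs : 0 ≤ Real.sqrt ((τ n) ^ 2 + 4 * τ n * A n * (L (n + 1) - μ)) :=
        Real.sqrt_nonneg _
      have han : 0 < a n := by
        rw [ha n]
        apply div_pos (by linarith [ih.1]) (by linarith [hc n])
      constructor
      · rw [hτ n]; nlinarith [ih.1]
      · rw [hA n]; linarith [ih.2]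
  have ha_pos : ∀ n, 0 < a n := by
    intro n
    have hs : 0 ≤ Real.sqrt ((τ n) ^ 2 + 4 * τ n * A n * (L (n + 1) - μ)) :=
      Real.sqrt_nonneg _
    rw [ha n]
    apply div_pos (by linarith [(hpos n).1]) (by linarith [hc n])
  have hApos : ∀ j, 1 ≤ j → 0 < A j := by
    intro j hj
    obtain ⟨n, rfl⟩ := Nat.exists_eq_add_of_le hj
    rw [add_comm, hA n]
    have := ha_pos n
    have := (hpos n).2
    linarith
  -- key quadratic identity
  have hkey : ∀ n, (L (n + 1) - μ) * (a n) ^ 2 = τ n * A (n + 1) := by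
    intro n
    set c := L (n + 1) - μ with hcdef
    set t := τ n with htdef
    have ht1 : 1 ≤ t := (hpos n).1
    have hAn : 0 ≤ A n := (hpos n).2
    have hcpos : 0 < c := hc n
    have hrad : 0 ≤ t ^ 2 + 4 * t * A n * c := by
      have h4 : 0 ≤ 4 * t * A n * c := by
        have : (0:ℝ) ≤ t := by linarith
        positivity
      nlinarith [sq_nonneg t]
    set s := Real.sqrt (t ^ 2 + 4 * t * A n * c) with hsdef
    have hs2 : s ^ 2 = t ^ 2 + 4 * t * A n * c := Real.sq_sqrt hrad
    have heq : a n * (2 * c) = t + s := by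
      rw [ha n, ← hcdef, ← htdef, ← hsdef]
      field_simp
    have h4 : (4 * c) * ((L (n+1) - μ) * (a n) ^ 2) = (4 * c) * (τ n * A (n + 1)) := by
      rw [hA n, ← hcdef, ← htdef]
      linear_combination (2 * c * (a n) - t + s) * heq + hs2
    exact mul_left_cancel₀ (by positivity) h4
  -- invariant τ j = 1 + μ A j
  have hinv : ∀ j, τ j = 1 + μ * A j := by
    intro j
    induction j with
    | zero => simp [hτ0, hA0]
    | succ n ih => rw [hτ n, hA n, ih]; ring
  -- A 1 computation
  have hc0 : 0 < L 1 - μ := hc 0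
  have hA1' : A 1 * (L 1 - μ) = 1 := by
    rw [hA 0, hA0, zero_add, ha 0, hτ0, hA0]
    rw [show (1:ℝ) ^ 2 + 4 * 1 * 0 * (L (0 + 1) - μ) = 1 by ring, Real.sqrt_one]
    have h1 : L (0 + 1) = L 1 := by norm_num
    rw [h1]
    field_simp
    norm_num
  -- Part 1 : A j (L j - μ) ≥ j²/4
  have part1 : ∀ j : ℕ, 1 ≤ j → (j : ℝ) ^ 2 / 4 ≤ A j * (L j - μ) := by
    intro j hj
    induction j, hj using Nat.le_induction with
    | base => rw [hA1']; norm_num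
    | succ n hn ih =>
      set c := L (n + 1) - μ with hcdef
      set t := τ n with htdef
      have ht1 : 1 ≤ t := (hpos n).1
      have hAn : 0 ≤ A n := (hpos n).2
      have hcpos : 0 < c := hc n
      have hrad : 0 ≤ t ^ 2 + 4 * t * A n * c := by
        have h4 : 0 ≤ 4 * t * A n * c := by
          have : (0:ℝ) ≤ t := by linarith
          positivity
        nlinarith [sq_nonneg t]
      set s := Real.sqrt (t ^ 2 + 4 * t * A n * c) with hsdef
      have hs2 : s ^ 2 = t ^ 2 + 4 * t * A n * c := Real.sq_sqrt hrad
      have hs0 : 0 ≤ s := Real.sqrt_nonneg _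
      have heq : a n * c = (t + s) / 2 := by
        rw [ha n, ← hcdef, ← htdef, ← hsdef, div_mul_eq_mul_div, mul_div_mul_right _ _ hcpos.ne']
      have hLmono : L n ≤ L (n + 1) := hmono (Nat.le_succ n)
      have hC : (n : ℝ) ^ 2 / 4 ≤ A n * c := by
        nlinarith [mul_le_mul_of_nonneg_left hLmono hAn]
      have hn0 : (0:ℝ) ≤ (n:ℝ) := Nat.cast_nonneg n
      have htAc : 0 ≤ (t - 1) * A n * c :=
        mul_nonneg (mul_nonneg (by linarith) hAn) hcpos.le
      have hsn : (n : ℝ) ≤ s := by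
        nlinarith [sq_nonneg (s - n), sq_nonneg (s + n), mul_nonneg hAn hcpos.le]
      have hgoal : ((n : ℝ) + 1) ^ 2 / 4 ≤ A (n + 1) * c := by
        rw [hA n, add_mul, heq]
        nlinarith
      push_cast
      exact hgoal
  -- setup for Part 2
  set r := Real.sqrt (Lmax / μ) with hrdef
  have hq1 : 1 ≤ Lmax / μ := by rw [le_div_iff₀ hμ]; linarith
  have hr1 : 1 ≤ r := Real.one_le_sqrt.2 hq1
  have hr2 : μ * r ^ 2 = Lmax := by
    rw [hrdef, Real.sq_sqrt (by positivity)]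
    field_simp
  have hrpos : 0 < r := by linarith
  have hQr : 1 + 1 / Q = (2 * r + 1) / (2 * r) := by
    rw [hQ]
    field_simp
  -- per-step growth
  have hstep : ∀ j, 1 ≤ j → (1 + 1 / Q) ^ 2 * A j ≤ A (j + 1) := by
    intro j hj
    have hx : 0 < A j := hApos j hj
    have hb : A j < A (j + 1) := by rw [hA j]; linarith [ha_pos j]
    have haj : a j = A (j + 1) - A j := by rw [hA j]; ring
    have hcle : L (j + 1) - μ ≤ Lmax := by linarith [(hLb (j+1)).2, hμ]
    have h1 : μ * (A j * A (j + 1)) ≤ Lmax * (a j) ^ 2 := by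
      have hk := hkey j
      have hτj : μ * A j ≤ τ j := by rw [hinv j]; linarith
      have hAj1 : 0 ≤ A (j + 1) := (hpos (j+1)).2
      linarith [mul_nonneg (sub_nonneg.2 hcle) (sq_nonneg (a j)),
        mul_nonneg (sub_nonneg.2 hτj) hAj1, hk]
    have h2 : A j * A (j + 1) ≤ r ^ 2 * (A (j + 1) - A j) ^ 2 := by
      rw [← haj]
      rw [← hr2, mul_assoc] at h1
      exact le_of_mul_le_mul_left h1 hμ
    have h3 : (2 * r + 1) ^ 2 * A j ≤ 4 * r ^ 2 * A (j + 1) :=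
      aux_rate r (A j) (A (j + 1)) hx hb h2
    rw [hQr, div_pow, div_mul_eq_mul_div, div_le_iff₀ (by positivity)]
    have he : A (j + 1) * (2 * r) ^ 2 = 4 * r ^ 2 * A (j + 1) := by ring
    rw [he]
    exact h3
  -- Part 2 : A j (L 1 - μ) ≥ (1+1/Q)^{2(j-1)}
  have part2 : ∀ j : ℕ, 1 ≤ j → (1 + 1 / Q) ^ (2 * (j - 1)) ≤ A j * (L 1 - μ) := by
    intro j hj
    induction j, hj using Nat.le_induction with
    | base => simpa using hA1'.symm.le
    | succ n hn ih =>
      have hexp : 2 * (n + 1 - 1) = 2 * (n - 1) + 2 := by omega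
      rw [hexp, pow_add]
      have hQ0 : (0:ℝ) ≤ (1 + 1 / Q) ^ 2 := by
        rw [hQr]; positivity
      have h1 : (1 + 1 / Q) ^ (2 * (n - 1)) * (1 + 1 / Q) ^ 2 ≤
          (A n * (L 1 - μ)) * (1 + 1 / Q) ^ 2 :=
        mul_le_mul_of_nonneg_right ih hQ0
      have h2 : ((1 + 1 / Q) ^ 2 * A n) * (L 1 - μ) ≤ A (n + 1) * (L 1 - μ) :=
        mul_le_mul_of_nonneg_right (hstep n hn) hc0.le
      nlinarith [h1, h2]
  -- conclude
  intro j hj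
  have hAj : 0 ≤ A j := (hpos j).2
  apply max_le
  · have := part1 j hj
    nlinarith [mul_nonneg hAj hμ.le]
  · have := part2 j hj
    have hL1j : L 1 ≤ L j := hmono hj
    nlinarith [mul_nonneg hAj hμ.le, mul_le_mul_of_nonneg_left hL1j hAj]
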